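/- Let P be a right quaternionic Banach space, Q a two-sided quaternionic Banach space, A : P → P a bounded right-linear operator and G : P → Q a bounded right-linear operator. For every p ∈ ℍ with |p|·‖A‖ < 1, the series Σ_{n≥0} pⁿ (G ∘ Aⁿ) (where pⁿ acts on Q by left scalar multiplication) converges absolutely in operator norm, and (Σ_{n≥0} pⁿ G Aⁿ) ∘ (I − 2 Re(p) A + |p|² A²) = G − p̄ (G ∘ A). In particular, if the operator I − 2 Re(p) A + |p|² A² is invertible with bounded inverse, then Σ_{n≥0} pⁿ G Aⁿ = (G − p̄ G A)(I − 2 Re(p) A + |p|² A²)⁻¹. -/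

import Mathlib

local notation "ℍ" => Quaternion ℝ

private lemma telescope_tsum {Q : Type*} [NormedAddCommGroup Q] [CompleteSpace Q]
    (f : ℕ → Q) (hf : Summable f) :
    ∑' n, (f n - f (n + 1)) = f 0 := by
  have h1 : Summable (fun n => f (n + 1)) := (summable_nat_add_iff 1).2 hf
  rw [Summable.tsum_sub hf h1, Summable.tsum_eq_zero_add hf]
  abel

set_option maxHeartbeats 1000000 in
open MulOpposite in
/-- Power series expansion of the slice hyperholomorphic extension of `G (I - xA)⁻¹`:
for `|p|‖A‖ < 1` the series `Σ pⁿ (G ∘ Aⁿ)` converges absolutely in operator norm,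
pointwise on `P`, and `(Σ pⁿ G Aⁿ)(I − 2 Re(p) A + |p|² A²) = G − p̄ G A`; hence if
`I − 2 Re(p) A + |p|² A²` is boundedly invertible, `Σ pⁿ G Aⁿ = (G − p̄ G A)(I − 2 Re(p) A + |p|² A²)⁻¹`. -/
theorem series_slice_extension
    (P Q : Type*)
    [NormedAddCommGroup P] [NormedSpace ℝ P] [CompleteSpace P]
    [Module ℍᵐᵒᵖ P] [IsBoundedSMul ℍᵐᵒᵖ P]
    [NormedAddCommGroup Q] [NormedSpace ℝ Q] [CompleteSpace Q]
    [Module ℍ Q] [Module ℍᵐᵒᵖ Q] [IsScalarTower ℝ ℍ Q] [SMulCommClass ℍ ℍᵐᵒᵖ Q]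
    [IsBoundedSMul ℍ Q] [IsBoundedSMul ℍᵐᵒᵖ Q]
    (A : P →L[ℝ] P) (G : P →L[ℝ] Q)
    (hA : ∀ (q : ℍ) (v : P), A (op q • v) = op q • A v)
    (hG : ∀ (q : ℍ) (v : P), G (op q • v) = op q • G v)
    (p : ℍ) (hp : ‖p‖ * ‖A‖ < 1) :
    Summable (fun n : ℕ => ‖p‖ ^ n * ‖G.comp (A ^ n)‖) ∧
    (∀ v : P, Summable (fun n : ℕ => p ^ n • G ((A ^ n) v))) ∧
    (∀ v : P,
      (∑' n : ℕ, p ^ n • G ((A ^ n)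
          (((1 : P →L[ℝ] P) - (2 * p.re) • A + (Quaternion.normSq p) • (A ^ 2)) v)))
        = G v - (star p) • G (A v)) ∧
    (∀ B : P →L[ℝ] P,
      ((1 : P →L[ℝ] P) - (2 * p.re) • A + (Quaternion.normSq p) • (A ^ 2)).comp B = 1 →
      B.comp ((1 : P →L[ℝ] P) - (2 * p.re) • A + (Quaternion.normSq p) • (A ^ 2)) = 1 →
      ∀ v : P, (∑' n : ℕ, p ^ n • G ((A ^ n) v))
        = G (B v) - (star p) • G (A (B v))) := by
  have hr0 : (0:ℝ) ≤ ‖p‖ * ‖A‖ := mul_nonneg (norm_nonneg _) (norm_nonneg _)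
  have hgeo : Summable (fun n : ℕ => (‖p‖ * ‖A‖) ^ n) :=
    summable_geometric_of_lt_one hr0 hp
  -- operator norm bound
  have hbound : ∀ n : ℕ, ‖G.comp (A ^ n)‖ ≤ ‖G‖ * ‖A‖ ^ n := by
    intro n
    induction n with
    | zero => simp [ContinuousLinearMap.one_def]
    | succ n ih =>
      have h1 : G.comp (A ^ (n + 1)) = (G.comp (A ^ n)).comp A := by
        rw [pow_succ]; rfl
      rw [h1, pow_succ, ← mul_assoc]
      exact (ContinuousLinearMap.opNorm_comp_le _ _).trans
        (mul_le_mul_of_nonneg_right ih (norm_nonneg _))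
  have hsum1 : Summable (fun n : ℕ => ‖p‖ ^ n * ‖G.comp (A ^ n)‖) := by
    refine Summable.of_nonneg_of_le
      (fun n => mul_nonneg (pow_nonneg (norm_nonneg _) _) (norm_nonneg _))
      (fun n => ?_) (hgeo.mul_left ‖G‖)
    calc ‖p‖ ^ n * ‖G.comp (A ^ n)‖ ≤ ‖p‖ ^ n * (‖G‖ * ‖A‖ ^ n) :=
          mul_le_mul_of_nonneg_left (hbound n) (pow_nonneg (norm_nonneg _) _)
      _ = ‖G‖ * (‖p‖ * ‖A‖) ^ n := by rw [mul_pow]; ring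
  -- pointwise norm bound for shifted series
  have hterm : ∀ (k : ℕ) (v : P), ∀ n : ℕ,
      ‖p ^ n • G ((A ^ (n + k)) v)‖ ≤ (‖G‖ * ‖A‖ ^ k * ‖v‖) * (‖p‖ * ‖A‖) ^ n := by
    intro k v n
    calc ‖p ^ n • G ((A ^ (n + k)) v)‖ ≤ ‖p ^ n‖ * ‖G ((A ^ (n + k)) v)‖ :=
          norm_smul_le _ _
      _ ≤ ‖p‖ ^ n * (‖G.comp (A ^ (n + k))‖ * ‖v‖) := by
          rw [norm_pow]
          exact mul_le_mul_of_nonneg_left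
            ((G.comp (A ^ (n + k))).le_opNorm v) (pow_nonneg (norm_nonneg _) _)
      _ ≤ ‖p‖ ^ n * (‖G‖ * ‖A‖ ^ (n + k) * ‖v‖) := by
          refine mul_le_mul_of_nonneg_left ?_ (pow_nonneg (norm_nonneg _) _)
          exact mul_le_mul_of_nonneg_right (hbound _) (norm_nonneg _)
      _ = (‖G‖ * ‖A‖ ^ k * ‖v‖) * (‖p‖ * ‖A‖) ^ n := by
          rw [pow_add, mul_pow]; ring
  have hsum2 : ∀ (k : ℕ) (v : P), Summable (fun n : ℕ => p ^ n • G ((A ^ (n + k)) v)) := by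
    intro k v
    exact Summable.of_norm_bounded (hgeo.mul_left _) (hterm k v)
  have hsum2' : ∀ v : P, Summable (fun n : ℕ => p ^ n • G ((A ^ n) v)) := by
    intro v
    simpa using hsum2 0 v
  have hmain : ∀ v : P,
      (∑' n : ℕ, p ^ n • G ((A ^ n)
          (((1 : P →L[ℝ] P) - (2 * p.re) • A + (Quaternion.normSq p) • (A ^ 2)) v)))
        = G v - (star p) • G (A v) := by
    intro v
    set c : ℝ := 2 * p.re
    set s : ℝ := Quaternion.normSq p
    set w : ℕ → Q := fun n => G ((A ^ n) v) with hw
    have key : ∀ n : ℕ,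
        p ^ n • G ((A ^ n) (((1 : P →L[ℝ] P) - c • A + s • (A ^ 2)) v))
        = (p ^ n • w n - p ^ (n + 1) • w (n + 1))
          - star p • (p ^ n • w (n + 1) - p ^ (n + 1) • w (n + 2)) := by
      intro n
      have e1 : (A ^ n) (((1 : P →L[ℝ] P) - c • A + s • (A ^ 2)) v)
          = (A ^ n) v - c • (A ^ (n + 1)) v + s • (A ^ (n + 2)) v := by
        have h1 : (A ^ (n + 1)) v = (A ^ n) (A v) := by rw [pow_succ]; rfl
        have h2 : (A ^ (n + 2)) v = (A ^ n) ((A ^ 2) v) := by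
          rw [pow_add]; rfl
        simp [h1, h2, map_add, map_sub, map_smul]
      rw [e1]
      have e2 : G ((A ^ n) v - c • (A ^ (n + 1)) v + s • (A ^ (n + 2)) v)
          = w n - c • w (n + 1) + s • w (n + 2) := by
        simp [hw, map_add, map_sub, map_smul]
      rw [e2]
      -- convert real smul to quaternion smul
      have hreal : ∀ (t : ℝ) (x : Q), t • x = ((t : ℍ)) • x := by
        intro t x
        rw [← algebraMap_smul ℍ t x]
        rfl
      have hc : (c : ℍ) = p + star p := by
        rw [Quaternion.self_add_star']
      have hs : (s : ℍ) = star p * p := by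
        rw [Quaternion.star_mul_self]
      have hcomm : Commute (star p) p := star_comm_self' p
      have e3 : p ^ n * (p + star p) = p ^ (n + 1) + star p * p ^ n := by
        rw [mul_add, ← pow_succ, (hcomm.pow_right n).eq]
      have e4 : p ^ n * (star p * p) = star p * p ^ (n + 1) := by
        rw [← mul_assoc, ← (hcomm.pow_right n).eq, mul_assoc, ← pow_succ]
      simp only [smul_add, smul_sub, hreal, smul_smul]
      rw [hc, hs, e3, e4, add_smul, mul_smul, mul_smul]
      abel
    calc (∑' n : ℕ, p ^ n • G ((A ^ n) (((1 : P →L[ℝ] P) - c • A + s • (A ^ 2)) v)))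
        = ∑' n : ℕ, ((p ^ n • w n - p ^ (n + 1) • w (n + 1))
            - star p • (p ^ n • w (n + 1) - p ^ (n + 1) • w (n + 2))) := by
          exact tsum_congr key
      _ = G v - star p • G (A v) := by
          have hf : Summable (fun n : ℕ => p ^ n • w n) := by simpa [hw] using hsum2 0 v
          have hg : Summable (fun n : ℕ => p ^ n • w (n + 1)) := hsum2 1 v
          have hf' : Summable (fun n : ℕ => p ^ n • w n - p ^ (n + 1) • w (n + 1)) :=
            hf.sub ((summable_nat_add_iff 1).2 hf)
          have hg' : Summable (fun n : ℕ =>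
              star p • (p ^ n • w (n + 1) - p ^ (n + 1) • w (n + 2))) := by
            refine Summable.const_smul _ ?_
            exact hg.sub ((summable_nat_add_iff 1).2 hg)
          rw [Summable.tsum_sub hf' hg', telescope_tsum _ hf, Summable.tsum_const_smul _ (hg.sub ((summable_nat_add_iff 1).2 hg)),
            telescope_tsum _ hg]
          have h0 : w 0 = G v := by simp [hw]
          have h1 : w 1 = G (A v) := by simp [hw]
          rw [pow_zero, one_smul, one_smul, h0, h1]
  refine ⟨hsum1, hsum2', hmain, ?_⟩
  intro B hB1 hB2 v
  have hv := hmain (B v)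
  have hTB : (((1 : P →L[ℝ] P) - (2 * p.re) • A + (Quaternion.normSq p) • (A ^ 2)) (B v)) = v := by
    have := congrArg (fun f : P →L[ℝ] P => f v) hB1
    simpa using this
  rw [hTB] at hv
  exact hv
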